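/- Let (W(t), M(t)) be a solution of the synaptic ODE with timescale τ = 1/2 and initial condition (W₀, M₀) ∈ D. Then L(W(t), M(t)) = L(W₀, M₀)·e^{−8t} for all t ≥ 0. -/

import Mathlib

open Matrix Filter
open scoped Matrix

attribute [local instance] Matrix.frobeniusNormedAddCommGroup Matrix.frobeniusNormedSpace

/-- Matrix multiplication as a continuous bilinear map (Frobenius norm). -/
noncomputable def mulCLM (a b c : ℕ) :
    Matrix (Fin a) (Fin b) ℝ →L[ℝ] Matrix (Fin b) (Fin c) ℝ →L[ℝ] Matrix (Fin a) (Fin c) ℝ :=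
  LinearMap.mkContinuous₂
    (LinearMap.mk₂ ℝ (fun (X : Matrix (Fin a) (Fin b) ℝ) (Y : Matrix (Fin b) (Fin c) ℝ) => X * Y)
      (fun X X' Y => Matrix.add_mul X X' Y) (fun r X Y => Matrix.smul_mul r X Y)
      (fun X Y Y' => Matrix.mul_add X Y Y') (fun r X Y => Matrix.mul_smul X r Y)) 1
    (fun X Y => by simpa using Matrix.frobenius_norm_mul X Y)

@[simp] lemma mulCLM_apply {a b c : ℕ} (X : Matrix (Fin a) (Fin b) ℝ)
    (Y : Matrix (Fin b) (Fin c) ℝ) : mulCLM a b c X Y = X * Y := rfl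

/-- Transpose as a continuous linear map (Frobenius norm). -/
noncomputable def transCLM (a b : ℕ) :
    Matrix (Fin a) (Fin b) ℝ →L[ℝ] Matrix (Fin b) (Fin a) ℝ :=
  LinearMap.mkContinuous (Matrix.transposeLinearEquiv (Fin a) (Fin b) ℝ ℝ) 1
    (fun X => by simpa using (Matrix.frobenius_norm_transpose X).le)

@[simp] lemma transCLM_apply {a b : ℕ} (X : Matrix (Fin a) (Fin b) ℝ) :
    transCLM a b X = Xᵀ := rfl

lemma HasDerivWithinAt.matmul {a b c : ℕ} {f : ℝ → Matrix (Fin a) (Fin b) ℝ}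
    {g : ℝ → Matrix (Fin b) (Fin c) ℝ} {f' g'} {s : Set ℝ} {x : ℝ}
    (hf : HasDerivWithinAt f f' s x) (hg : HasDerivWithinAt g g' s x) :
    HasDerivWithinAt (fun t => f t * g t) (f' * g x + f x * g') s x := by
  letI : NormedAddCommGroup (Matrix (Fin b) (Fin c) ℝ →L[ℝ] Matrix (Fin a) (Fin c) ℝ) :=
    @ContinuousLinearMap.toNormedAddCommGroup ℝ ℝ _ _ _ _ _ _ _ _ _ _
  letI : NormedSpace ℝ (Matrix (Fin b) (Fin c) ℝ →L[ℝ] Matrix (Fin a) (Fin c) ℝ) :=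
    ContinuousLinearMap.toNormedSpace
  have h1 := (mulCLM a b c).hasFDerivAt.comp_hasDerivWithinAt x hf
  exact h1.clm_apply hg

lemma HasDerivWithinAt.mtrans {a b : ℕ} {f : ℝ → Matrix (Fin a) (Fin b) ℝ}
    {f'} {s : Set ℝ} {x : ℝ} (hf : HasDerivWithinAt f f' s x) :
    HasDerivWithinAt (fun t => (f t)ᵀ) f'ᵀ s x := by
  exact (transCLM a b).hasFDerivAt.comp_hasDerivWithinAt x hf


/-- A solution of the synaptic ODE with timescale `τ` on `[0, ∞)`:
a continuously differentiable curve `t ↦ (W t, M t)` staying in the domain `D`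
(i.e. `M t` symmetric positive definite) satisfying
`(1/2)·dW/dt = M⁻¹WA − W` and `τ·dM/dt = M⁻¹WAWᵀM⁻¹ − M`. -/
def IsSynSol {k n : ℕ} (A : Matrix (Fin n) (Fin n) ℝ) (τ : ℝ)
    (W : ℝ → Matrix (Fin k) (Fin n) ℝ) (M : ℝ → Matrix (Fin k) (Fin k) ℝ) : Prop :=
  ∀ t : ℝ, 0 ≤ t →
    (M t).PosDef ∧
    HasDerivWithinAt W ((2 : ℝ) • ((M t)⁻¹ * W t * A - W t)) (Set.Ici 0) t ∧
    HasDerivWithinAt M (τ⁻¹ • ((M t)⁻¹ * W t * A * (W t)ᵀ * (M t)⁻¹ - M t)) (Set.Ici 0) t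

/-- The Lyapunov function `L(W, M) = ‖WWᵀ − M²‖²` (Frobenius norm). -/
noncomputable def Lyap {k n : ℕ} (W : Matrix (Fin k) (Fin n) ℝ)
    (M : Matrix (Fin k) (Fin k) ℝ) : ℝ :=
  ‖W * Wᵀ - M * M‖ ^ 2

theorem lyap_exponential_decay {k n : ℕ} (hk : 0 < k) (hkn : k < n)
    (A : Matrix (Fin n) (Fin n) ℝ) (hA : A.PosDef)
    (W₀ : Matrix (Fin k) (Fin n) ℝ) (M₀ : Matrix (Fin k) (Fin k) ℝ) (hM₀ : M₀.PosDef)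
    (W : ℝ → Matrix (Fin k) (Fin n) ℝ) (M : ℝ → Matrix (Fin k) (Fin k) ℝ)
    (hsol : IsSynSol A (1/2 : ℝ) W M) (hW0 : W 0 = W₀) (hM0 : M 0 = M₀) :
    ∀ t : ℝ, 0 ≤ t → Lyap (W t) (M t) = Lyap W₀ M₀ * Real.exp (-8 * t) := by
  have hAs : Aᵀ = A := hA.isHermitian.eq
  set E : ℝ → Matrix (Fin k) (Fin k) ℝ := fun t => W t * (W t)ᵀ - M t * M t with hE
  -- E' = -4 E on [0, ∞)
  have hE' : ∀ t : ℝ, 0 ≤ t →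
      HasDerivWithinAt E ((-4 : ℝ) • E t) (Set.Ici 0) t := by
    intro t ht
    obtain ⟨hM, hW', hM'⟩ := hsol t ht
    have hMs : (M t)ᵀ = M t := hM.isHermitian.eq
    have hdet : IsUnit (M t).det := isUnit_iff_ne_zero.mpr hM.det_pos.ne'
    have h1 : (M t)⁻¹ * M t = 1 := Matrix.nonsing_inv_mul _ hdet
    have h2 : (M t) * (M t)⁻¹ = 1 := Matrix.mul_nonsing_inv _ hdet
    have h2' : ∀ Z : Matrix (Fin k) (Fin k) ℝ, M t * ((M t)⁻¹ * Z) = Z := by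
      intro Z; rw [← Matrix.mul_assoc, h2, one_mul]
    have hMi : ((M t)⁻¹)ᵀ = (M t)⁻¹ := by
      rw [Matrix.transpose_nonsing_inv, hMs]
    have h2half : ((1 : ℝ)/2)⁻¹ = (2 : ℝ) := by norm_num
    rw [h2half] at hM'
    have key := (hW'.matmul hW'.mtrans).sub (hM'.matmul hM')
    refine key.congr_deriv ?_
    simp only [Matrix.transpose_smul, Matrix.transpose_sub, Matrix.transpose_mul,
      Matrix.transpose_transpose, hAs, hMs, hMi, Matrix.smul_mul, Matrix.mul_smul,
      Matrix.mul_sub, Matrix.sub_mul, smul_sub, Matrix.mul_assoc, h1, h2', mul_one,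
      Matrix.mul_one, hE]
    module
  -- F t = exp (4 t) • E t is constant on [0, ∞)
  set F : ℝ → Matrix (Fin k) (Fin k) ℝ := fun t => Real.exp (4 * t) • E t with hF
  have hF' : ∀ t : ℝ, 0 ≤ t → HasDerivWithinAt F 0 (Set.Ici 0) t := by
    intro t ht
    have hexp : HasDerivWithinAt (fun t => Real.exp (4 * t)) (Real.exp (4 * t) * 4)
        (Set.Ici 0) t :=
      ((Real.hasDerivAt_exp (4 * t)).comp t (by
        simpa using (hasDerivAt_id t).const_mul (4 : ℝ))).hasDerivWithinAt
    have := hexp.smul (hE' t ht)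
    refine this.congr_deriv ?_
    rw [smul_smul]
    module
  have hconst : ∀ t : ℝ, 0 ≤ t → F t = F 0 := by
    intro t ht
    have hcont : ContinuousOn F (Set.Icc 0 t) := by
      intro x hx
      exact ((hF' x hx.1).continuousWithinAt).mono (fun y hy => hy.1)
    exact constant_of_has_deriv_right_zero hcont
      (fun x hx => (hF' x hx.1).mono (Set.Ici_subset_Ici.mpr hx.1)) t
      ⟨ht, le_refl t⟩
  intro t ht
  have h0 : F 0 = E 0 := by simp [hF]
  have hFt : Real.exp (4 * t) • E t = E 0 := by
    have := hconst t ht; rwa [h0] at this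
  have hEt : E t = Real.exp (-(4 * t)) • E 0 := by
    rw [← hFt, smul_smul, ← Real.exp_add]; simp
  have hLy : Lyap (W t) (M t) = ‖E t‖ ^ 2 := rfl
  rw [hLy, hEt, norm_smul]
  simp only [Real.norm_eq_abs, Real.abs_exp]
  rw [mul_pow, sq (Real.exp (-(4*t))), ← Real.exp_add]
  have : Lyap W₀ M₀ = ‖E 0‖ ^ 2 := by rw [← hW0, ← hM0]; rfl
  rw [this]
  ring_nf
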